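/- For the blown-up system, the Jacobian at the origin O = (0,0) is diag(AS, -AS), and the Jacobian at I_x = (S/(S+M), 0) (assuming S > -M > 0) is upper triangular with diagonal entries -AS and -AMS/(M+S); since M < 0 and S + M > 0, the second diagonal entry -AMS/(M+S) is positive, so both equilibria are saddle points. -/

import Mathlib

/-- for the blown-up system, the Jacobian at the origin is diag(AS, -AS) and
the Jacobian at I_x = (S/(S+M), 0) is upper triangular with diagonal entries -AS and
-AMS/(M+S) > 0, so both equilibria are saddle points. -/
theorem stmt_15 (A M Q S : ℝ) (hA : 0 < A) (hM : M < 0) (hQ : 0 < Q) (hS : 0 < S)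
    (hSM : S > -M)
    (G₁ G₂ : ℝ → ℝ → ℝ)
    (hG₁ : ∀ x y, G₁ x y =
      x * (S * (1 - x) * (A + x * y) + x * (M - x * y) * (x * y - 1) * (A + x * y) - Q * x * y))
    (hG₂ : ∀ x y, G₂ x y = S * y * (x - 1) * (x * y + A))
    (μ : ℝ) (hμ : μ = S / (S + M)) :
    (!![deriv (fun x => G₁ x 0) 0, deriv (fun y => G₁ 0 y) 0;
        deriv (fun x => G₂ x 0) 0, deriv (fun y => G₂ 0 y) 0] =
      !![A * S, 0; 0, -(A * S)]) ∧
    0 < A * S ∧ -(A * S) < 0 ∧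
    deriv (fun x => G₂ x 0) μ = 0 ∧
    deriv (fun x => G₁ x 0) μ = -(A * S) ∧
    deriv (fun y => G₂ μ y) 0 = -(A * M * S / (M + S)) ∧
    0 < -(A * M * S / (M + S)) := by
  have hSM0 : (0:ℝ) < S + M := by linarith
  have hSMne : S + M ≠ 0 := ne_of_gt hSM0
  have h1 : (fun x => G₁ x 0) = fun x => A * S * x - A * (S + M) * x ^ 2 := by
    funext x; rw [hG₁]; ring
  have d1 : ∀ p : ℝ, deriv (fun x => G₁ x 0) p = A * S - A * (S + M) * (2 * p) := by
    intro p
    rw [h1]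
    have := (((hasDerivAt_id p).const_mul (A * S)).sub
      ((hasDerivAt_pow 2 p).const_mul (A * (S + M)))).deriv
    simp at this; exact this
  have h2 : (fun y => G₁ 0 y) = fun _ : ℝ => (0:ℝ) := by
    funext y; rw [hG₁]; ring
  have h3 : (fun x => G₂ x 0) = fun _ : ℝ => (0:ℝ) := by
    funext x; rw [hG₂]; ring
  have h4 : (fun y => G₂ 0 y) = fun y : ℝ => -(S * A) * y := by
    funext y; rw [hG₂]; ring
  have h5 : (fun y => G₂ μ y) = fun y : ℝ =>
      S * (μ - 1) * μ * y ^ 2 + S * (μ - 1) * A * y := by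
    funext y; rw [hG₂]; ring
  have d4 : deriv (fun y => G₂ 0 y) 0 = -(S * A) := by
    rw [h4]
    simpa using ((hasDerivAt_id (0:ℝ)).const_mul (-(S * A))).deriv
  have d5 : deriv (fun y => G₂ μ y) 0 = S * (μ - 1) * A := by
    rw [h5]
    have := ((((hasDerivAt_pow 2 (0:ℝ))).const_mul (S * (μ - 1) * μ)).add
      (((hasDerivAt_id (0:ℝ))).const_mul (S * (μ - 1) * A))).deriv
    simp at this; exact this
  refine ⟨?_, by positivity, by nlinarith, ?_, ?_, ?_, ?_⟩
  · rw [d1, h2, h3, d4]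
    simp [Matrix.ext_iff, Fin.forall_fin_two]
    ring
  · rw [h3]; simp
  · rw [d1, hμ]
    field_simp
    ring
  · have hMS0 : (0:ℝ) < M + S := by linarith
    rw [d5, hμ]
    rw [show M + S = S + M from add_comm M S]
    field_simp
    ring_nf
  · have hMS0 : (0:ℝ) < M + S := by linarith
    have : -(A * M * S / (M + S)) = A * (-M) * S / (M + S) := by ring
    rw [this]
    have hM' : (0:ℝ) < -M := by linarith
    exact div_pos (mul_pos (mul_pos hA hM') hS) hMS0
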